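/- Suppose β > 0 with β ≠ 1, and let α > 0 and η > 0. Then there exist constants C₁, C₂, C₃ ≥ 0 (depending only on α, β, η) such that for every real r > max(1, η^{1/α}), E[ 1 − exp( − η W₁ W₂ / r^α ) ] ≤ C₁ r^{−α} + C₂ r^{−αβ} log r + C₃ r^{−αβ}. -/

import Mathlib

open MeasureTheory Set Real
open scoped ENNReal NNReal

/-- The Pareto(β) probability measure on `ℝ`, with density `w ↦ β w^{−β−1} 1_{[1,∞)}(w)`
with respect to Lebesgue measure. -/
noncomputable def pareto (β : ℝ) : Measure ℝ :=
  volume.withDensity (Set.indicator (Set.Ici 1) fun w => ENNReal.ofReal (β * w ^ (-β - 1)))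

namespace Stmt7

lemma pareto_eq_paretoMeasure (β : ℝ) : pareto β = ProbabilityTheory.paretoMeasure 1 β := by
  unfold pareto ProbabilityTheory.paretoMeasure
  congr 1
  funext w
  rw [ProbabilityTheory.paretoPDF_eq]
  by_cases h : (1:ℝ) ≤ w
  · simp [h, Set.indicator_of_mem, show -(β+1) = -β-1 by ring]
  · simp [h, Set.indicator_of_notMem, mem_Ici]

lemma pareto_isProb {β : ℝ} (hβ : 0 < β) : IsProbabilityMeasure (pareto β) := by
  rw [pareto_eq_paretoMeasure]
  exact ProbabilityTheory.isProbabilityMeasure_paretoMeasure one_pos hβ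

lemma pareto_density_meas (β : ℝ) :
    Measurable (Set.indicator (Set.Ici 1) fun w : ℝ => (β * w ^ (-β - 1)).toNNReal) :=
  Measurable.indicator ((measurable_const.mul (measurable_id.pow_const _)).real_toNNReal)
    measurableSet_Ici

lemma pareto_eq' (β : ℝ) : pareto β = volume.withDensity
    (fun w => ((Set.indicator (Set.Ici 1) (fun w : ℝ => (β * w ^ (-β - 1)).toNNReal) w : ℝ≥0) : ℝ≥0∞)) := by
  unfold pareto
  congr 1
  funext w
  by_cases h : w ∈ Set.Ici (1:ℝ) <;>
    simp [h, Set.indicator_of_mem, Set.indicator_of_notMem, ENNReal.ofReal]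

lemma integral_pareto {β : ℝ} (hβ : 0 < β) (g : ℝ → ℝ) :
    ∫ w, g w ∂(pareto β) = ∫ w in Set.Ici 1, β * w ^ (-β - 1) * g w := by
  rw [pareto_eq', integral_withDensity_eq_integral_smul (pareto_density_meas β)]
  rw [← integral_indicator measurableSet_Ici]
  congr 1
  funext w
  by_cases h : w ∈ Set.Ici (1:ℝ)
  · have hw : (0:ℝ) < w := lt_of_lt_of_le one_pos h
    have hnn : 0 ≤ β * w ^ (-β - 1) := by positivity
    simp [h, Set.indicator_of_mem, NNReal.smul_def, Real.coe_toNNReal _ hnn]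
  · simp [h, Set.indicator_of_notMem]

lemma pareto_Iio (β : ℝ) : pareto β (Set.Iio 1) = 0 := by
  unfold pareto
  rw [withDensity_apply _ measurableSet_Iio]
  rw [setLIntegral_congr_fun measurableSet_Iio (fun w (hw : w < 1) =>
    Set.indicator_of_notMem (by simpa [Set.mem_Ici, not_le] using hw) _)]
  exact lintegral_zero

lemma pareto_ae {β : ℝ} : ∀ᵐ w ∂(pareto β), 1 ≤ w := by
  rw [ae_iff]
  have h1 : {w : ℝ | ¬ 1 ≤ w} = Set.Iio 1 := by ext w; simp [Set.mem_Iio]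
  rw [h1]; exact pareto_Iio β

lemma pareto_prod_ae {β : ℝ} (hβ : 0 < β) :
    ∀ᵐ p ∂((pareto β).prod (pareto β)), 1 ≤ p.1 ∧ 1 ≤ p.2 := by
  haveI := pareto_isProb hβ
  rw [ae_iff]
  have hnull : ((pareto β).prod (pareto β))
      ((Set.Iio 1 ×ˢ Set.univ) ∪ (Set.univ ×ˢ Set.Iio (1:ℝ))) = 0 := by
    refine measure_union_null ?_ ?_ <;>
      rw [Measure.prod_prod] <;> simp [pareto_Iio β]
  refine measure_mono_null (fun p hp => ?_) hnull
  simp only [Set.mem_setOf_eq, not_and_or, not_le] at hp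
  rcases hp with h | h
  · exact Or.inl ⟨h, Set.mem_univ _⟩
  · exact Or.inr ⟨Set.mem_univ _, h⟩

lemma pareto_dens_int {β : ℝ} (hβ : 0 < β) {T : ℝ} (hT : 0 < T) :
    IntegrableOn (fun w : ℝ => β * w ^ (-β - 1)) (Set.Ici T) := by
  rw [integrableOn_Ici_iff_integrableOn_Ioi]
  exact (integrableOn_Ioi_rpow_of_lt (by linarith) hT).const_mul β

lemma pareto_tail {β : ℝ} (hβ : 0 < β) {T : ℝ} (hT : 0 < T) :
    ∫ w in Set.Ici T, β * w ^ (-β - 1) = T ^ (-β) := by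
  rw [integral_Ici_eq_integral_Ioi, integral_const_mul,
    integral_Ioi_rpow_of_lt (by linarith) hT]
  have h : -β - 1 + 1 = -β := by ring
  rw [h]; field_simp

lemma pareto_integrand_int {β : ℝ} (hβ : 0 < β) {h : ℝ → ℝ} (hmeas : Measurable h)
    (h01 : ∀ w, 1 ≤ w → 0 ≤ h w ∧ h w ≤ 1) {s : Set ℝ} (hs : s ⊆ Set.Ici 1) :
    IntegrableOn (fun w => β * w ^ (-β - 1) * h w) s := by
  have hDmeas : Measurable fun w : ℝ => β * w ^ (-β - 1) :=
    measurable_const.mul (measurable_id.pow_const _)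
  refine Integrable.mono' (((pareto_dens_int hβ one_pos).mono_set hs))
    ((hDmeas.mul hmeas).aestronglyMeasurable) ?_
  refine Filter.Eventually.filter_mono (ae_mono (Measure.restrict_mono hs le_rfl))
    ((ae_restrict_iff' measurableSet_Ici).mpr (ae_of_all _ fun w hw => ?_))
  have hw0 : (0:ℝ) < w := lt_of_lt_of_le one_pos hw
  have hD0 : 0 ≤ β * w ^ (-β - 1) := by positivity
  rw [Real.norm_eq_abs, abs_mul, abs_of_nonneg hD0]
  calc β * w ^ (-β - 1) * |h w| ≤ β * w ^ (-β - 1) * 1 :=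
        mul_le_mul_of_nonneg_left (abs_le.mpr ⟨by linarith [(h01 w hw).1], (h01 w hw).2⟩) hD0
    _ = β * w ^ (-β - 1) := mul_one _

lemma pareto_split {β : ℝ} (hβ : 0 < β) {T : ℝ} (hT : 1 ≤ T) {h : ℝ → ℝ}
    (hmeas : Measurable h) (h01 : ∀ w, 1 ≤ w → 0 ≤ h w ∧ h w ≤ 1) :
    ∫ w, h w ∂(pareto β) ≤ (∫ w in Set.Ico 1 T, β * w ^ (-β - 1) * h w) + T ^ (-β) := by
  have hsub1 : Set.Ico (1:ℝ) T ⊆ Set.Ici 1 := Set.Ico_subset_Ici_self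
  have hsub2 : Set.Ici T ⊆ Set.Ici (1:ℝ) := Set.Ici_subset_Ici.mpr hT
  have hdis : Disjoint (Set.Ico (1:ℝ) T) (Set.Ici T) :=
    Set.disjoint_left.mpr fun x hx hx' => absurd hx.2 (not_lt.mpr hx')
  rw [integral_pareto hβ, ← Set.Ico_union_Ici_eq_Ici hT,
    setIntegral_union hdis measurableSet_Ici
      (pareto_integrand_int hβ hmeas h01 hsub1) (pareto_integrand_int hβ hmeas h01 hsub2)]
  refine add_le_add_right ?_ _
  calc ∫ w in Set.Ici T, β * w ^ (-β - 1) * h w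
      ≤ ∫ w in Set.Ici T, β * w ^ (-β - 1) := by
        refine setIntegral_mono_on (pareto_integrand_int hβ hmeas h01 hsub2)
          (pareto_dens_int hβ (by linarith)) measurableSet_Ici fun w hw => ?_
        have hw1 : (1:ℝ) ≤ w := le_trans hT hw
        have hw0 : (0:ℝ) < w := lt_of_lt_of_le one_pos hw1
        have hD0 : 0 ≤ β * w ^ (-β - 1) := by positivity
        nlinarith [(h01 w hw1).2]
    _ = T ^ (-β) := pareto_tail hβ (by linarith)

lemma pareto_est {β : ℝ} (hβ : 0 < β) {T c e : ℝ} (hT : 1 ≤ T) {h : ℝ → ℝ}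
    (hmeas : Measurable h) (h01 : ∀ w, 1 ≤ w → 0 ≤ h w ∧ h w ≤ 1)
    (hbound : ∀ w ∈ Set.Ico (1:ℝ) T, β * w ^ (-β - 1) * h w ≤ c * w ^ e) :
    ∫ w, h w ∂(pareto β) ≤ c * (∫ w in Set.Ico 1 T, w ^ e) + T ^ (-β) := by
  refine le_trans (pareto_split hβ hT hmeas h01) (add_le_add_left ?_ _)
  rw [← integral_const_mul]
  refine setIntegral_mono_on
    (pareto_integrand_int hβ hmeas h01 Set.Ico_subset_Ici_self)
    (((ContinuousOn.integrableOn_Icc ?_).mono_set Set.Ico_subset_Icc_self))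
    measurableSet_Ico hbound
  refine continuousOn_const.mul (fun x hx => ?_)
  exact (Real.continuousAt_rpow_const x e
    (Or.inl (ne_of_gt (lt_of_lt_of_le one_pos hx.1)))).continuousWithinAt

lemma integral_Ico_rpow {T e : ℝ} (hT : 1 ≤ T) (he : e ≠ -1) :
    ∫ w in Set.Ico (1:ℝ) T, w ^ e = (T ^ (e+1) - 1) / (e+1) := by
  rw [integral_Ico_eq_integral_Ioo, ← integral_Ioc_eq_integral_Ioo,
    ← intervalIntegral.integral_of_le hT,
    integral_rpow (Or.inr ⟨he, by rw [Set.uIcc_of_le hT]; simp⟩)]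
  simp [Real.one_rpow]

lemma integral_Ico_inv {T : ℝ} (hT : 1 ≤ T) :
    ∫ w in Set.Ico (1:ℝ) T, w ^ (-1:ℝ) = Real.log T := by
  rw [integral_Ico_eq_integral_Ioo, ← integral_Ioc_eq_integral_Ioo,
    ← intervalIntegral.integral_of_le hT]
  rw [intervalIntegral.integral_congr (g := fun x : ℝ => x⁻¹)
    (fun x _ => Real.rpow_neg_one x)]
  rw [integral_inv (by rw [Set.uIcc_of_le hT]; simp)]
  rw [div_one]

lemma min_meas {a : ℝ} : Measurable fun w : ℝ => min 1 (a * w) :=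
  measurable_const.min (measurable_id.const_mul a)

lemma min01 {a : ℝ} (ha : 0 ≤ a) : ∀ w : ℝ, 1 ≤ w → 0 ≤ min 1 (a * w) ∧ min 1 (a * w) ≤ 1 :=
  fun w hw => ⟨le_min one_pos.le (by positivity), min_le_left _ _⟩

lemma inner_le_one {β : ℝ} (hβ : 0 < β) {a : ℝ} (ha : 0 ≤ a) :
    ∫ w, min 1 (a * w) ∂(pareto β) ≤ 1 := by
  haveI := pareto_isProb hβ
  calc ∫ w, min 1 (a * w) ∂(pareto β) ≤ ∫ _, (1:ℝ) ∂(pareto β) :=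
        integral_mono_of_nonneg
          (Filter.Eventually.mono pareto_ae fun w hw => (min01 ha w hw).1)
          (integrable_const 1) (ae_of_all _ fun w => min_le_left _ _)
    _ = 1 := by simp

/-- Inner bound, case β < 1. -/
lemma inner_lt {β : ℝ} (hβ : 0 < β) (hβ1 : β < 1) {a : ℝ} (ha0 : 0 < a) (ha1 : a < 1) :
    ∫ w, min 1 (a * w) ∂(pareto β) ≤ a ^ β / (1 - β) := by
  have hT : 1 ≤ 1/a := (le_div_iff₀ ha0).mpr (by linarith)
  have key := pareto_est hβ (c := a * β) (e := -β) hT min_meas (min01 ha0.le) ?_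
  · rw [integral_Ico_rpow hT (by linarith)] at key
    refine le_trans key ?_
    have h1 : (1/a) ^ (-β) = a ^ β := by
      rw [one_div, Real.inv_rpow ha0.le, Real.rpow_neg ha0.le, inv_inv]
    have h2 : (1/a) ^ (-β + 1) = a ^ (β - 1) := by
      rw [one_div, Real.inv_rpow ha0.le, ← Real.rpow_neg ha0.le]; ring_nf
    have h3 : a * a ^ (β - 1) = a ^ β := by
      rw [mul_comm, ← Real.rpow_add_one ha0.ne']; ring_nf
    rw [h1, h2]
    have hab : 0 < a ^ β := Real.rpow_pos_of_pos ha0 β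
    have h1β : 0 < 1 - β := by linarith
    rw [show (-β+1:ℝ) = 1-β from by ring, le_div_iff₀ h1β]
    have hu : 0 ≤ a ^ (β - 1) := Real.rpow_nonneg ha0.le _
    field_simp
    nlinarith [h3, hβ.le, ha0.le, hab]
  · intro w hw
    have hw0 : (0:ℝ) < w := lt_of_lt_of_le one_pos hw.1
    have hD0 : 0 ≤ β * w ^ (-β - 1) := by positivity
    calc β * w ^ (-β - 1) * min 1 (a * w) ≤ β * w ^ (-β - 1) * (a * w) :=
          mul_le_mul_of_nonneg_left (min_le_right _ _) hD0
      _ = a * β * w ^ (-β) := by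
          rw [show (-β : ℝ) = (-β - 1) + 1 by ring, Real.rpow_add_one hw0.ne']
          ring

/-- Inner bound, case β > 1. -/
lemma inner_gt {β : ℝ} (hβ1 : 1 < β) {a : ℝ} (ha0 : 0 < a) (ha1 : a < 1) :
    ∫ w, min 1 (a * w) ∂(pareto β) ≤ (β / (β - 1) + 1) * a := by
  have hβ : 0 < β := by linarith
  have hT : 1 ≤ 1/a := (le_div_iff₀ ha0).mpr (by linarith)
  have key := pareto_est hβ (c := a * β) (e := -β) hT min_meas (min01 ha0.le) ?_
  · rw [integral_Ico_rpow hT (by linarith)] at key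
    refine le_trans key ?_
    have h1 : (1/a) ^ (-β) = a ^ β := by
      rw [one_div, Real.inv_rpow ha0.le, Real.rpow_neg ha0.le, inv_inv]
    rw [h1]
    have hab : 0 < a ^ β := Real.rpow_pos_of_pos ha0 β
    have haβa : a ^ β ≤ a := by
      calc a ^ β ≤ a ^ (1:ℝ) := Real.rpow_le_rpow_of_exponent_ge ha0 ha1.le (by linarith)
        _ = a := Real.rpow_one a
    have hTpos : (0:ℝ) ≤ (1/a) ^ (-β + 1) := Real.rpow_nonneg (by positivity) _
    have h1β : 0 < β - 1 := by linarith
    have hfrac : ((1/a) ^ (-β+1) - 1) / (-β + 1) ≤ 1 / (β - 1) := by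
      have heq : ((1/a) ^ (-β+1) - 1) / (-β + 1) = (1 - (1/a) ^ (-β+1)) / (β - 1) := by
        rw [div_eq_div_iff (by linarith) (by linarith)]; ring
      rw [heq, div_le_div_iff₀ h1β h1β]; nlinarith
    calc a * β * (((1/a) ^ (-β+1) - 1) / (-β + 1)) + a ^ β
        ≤ a * β * (1 / (β - 1)) + a := by
          refine add_le_add (mul_le_mul_of_nonneg_left hfrac (by positivity)) haβa
      _ = (β / (β - 1) + 1) * a := by field_simp
  · intro w hw
    have hw0 : (0:ℝ) < w := lt_of_lt_of_le one_pos hw.1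
    have hD0 : 0 ≤ β * w ^ (-β - 1) := by positivity
    calc β * w ^ (-β - 1) * min 1 (a * w) ≤ β * w ^ (-β - 1) * (a * w) :=
          mul_le_mul_of_nonneg_left (min_le_right _ _) hD0
      _ = a * β * w ^ (-β) := by
          rw [show (-β : ℝ) = (-β - 1) + 1 by ring, Real.rpow_add_one hw0.ne']
          ring

/-- Combination of the first two steps: pointwise bound and Fubini. -/
lemma step12 {β : ℝ} (hβ : 0 < β) {s : ℝ} (hs0 : 0 < s) {B : ℝ → ℝ} (hB : Measurable B)
    (hB01 : ∀ w, 1 ≤ w → 0 ≤ B w ∧ B w ≤ 1)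
    (hinner : ∀ w₁, 1 ≤ w₁ → ∫ w, min 1 ((s * w₁) * w) ∂(pareto β) ≤ B w₁) :
    ∫ p : ℝ × ℝ, (1 - Real.exp (-(s * (p.1 * p.2)))) ∂((pareto β).prod (pareto β))
      ≤ ∫ w, B w ∂(pareto β) := by
  haveI := pareto_isProb hβ
  have hcont : Continuous fun p : ℝ × ℝ => min 1 (s * (p.1 * p.2)) :=
    continuous_const.min (continuous_const.mul (continuous_fst.mul continuous_snd))
  have hF2int : Integrable (fun p : ℝ × ℝ => min 1 (s * (p.1 * p.2)))
      ((pareto β).prod (pareto β)) := by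
    refine Integrable.mono' (integrable_const 1) hcont.aestronglyMeasurable ?_
    filter_upwards [pareto_prod_ae hβ] with p hp
    have h1 : 0 ≤ s * (p.1 * p.2) := mul_nonneg hs0.le (mul_nonneg (by linarith [hp.1]) (by linarith [hp.2]))
    have h2 : 0 ≤ min 1 (s * (p.1 * p.2)) := le_min zero_le_one h1
    rw [Real.norm_eq_abs, abs_le]
    exact ⟨by linarith, min_le_left _ _⟩
  have step1 : ∫ p : ℝ × ℝ, (1 - Real.exp (-(s * (p.1 * p.2)))) ∂((pareto β).prod (pareto β))
      ≤ ∫ p : ℝ × ℝ, min 1 (s * (p.1 * p.2)) ∂((pareto β).prod (pareto β)) := by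
    refine integral_mono_of_nonneg ?_ hF2int (ae_of_all _ fun p => ?_)
    · filter_upwards [pareto_prod_ae hβ] with p hp
      have h1 : 0 ≤ s * (p.1 * p.2) := mul_nonneg hs0.le (mul_nonneg (by linarith [hp.1]) (by linarith [hp.2]))
      have h2 : Real.exp (-(s * (p.1 * p.2))) ≤ 1 := by
        rw [← Real.exp_zero]
        exact Real.exp_le_exp.mpr (by linarith)
      simp only [Pi.zero_apply]; linarith
    · show 1 - Real.exp (-(s * (p.1 * p.2))) ≤ min 1 (s * (p.1 * p.2))
      refine le_min (by linarith [Real.exp_pos (-(s * (p.1 * p.2)))])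
        (by linarith [Real.add_one_le_exp (-(s * (p.1 * p.2)))])
  have step2 : ∫ p : ℝ × ℝ, min 1 (s * (p.1 * p.2)) ∂((pareto β).prod (pareto β))
      = ∫ w₁, ∫ w₂, min 1 (s * (w₁ * w₂)) ∂(pareto β) ∂(pareto β) :=
    integral_prod _ hF2int
  have hBint : Integrable B (pareto β) := by
    refine Integrable.mono' (integrable_const 1) hB.aestronglyMeasurable ?_
    filter_upwards [pareto_ae] with w hw
    rw [Real.norm_eq_abs, abs_le]
    exact ⟨by linarith [(hB01 w hw).1], (hB01 w hw).2⟩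
  have step3 : ∫ w₁, ∫ w₂, min 1 (s * (w₁ * w₂)) ∂(pareto β) ∂(pareto β)
      ≤ ∫ w, B w ∂(pareto β) := by
    refine integral_mono_of_nonneg ?_ hBint ?_
    · filter_upwards [pareto_ae] with w₁ hw₁
      refine integral_nonneg_of_ae ?_
      filter_upwards [pareto_ae] with w₂ hw₂
      have : 0 ≤ s * (w₁ * w₂) := mul_nonneg hs0.le (mul_nonneg (by linarith) (by linarith))
      exact le_min zero_le_one this
    · filter_upwards [pareto_ae] with w₁ hw₁
      have heq : (fun w₂ => min 1 (s * (w₁ * w₂))) = fun w₂ => min 1 ((s * w₁) * w₂) := by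
        funext w₂; ring_nf
      simpa [heq] using hinner w₁ hw₁
  linarith [step1, step2 ▸ step1, step3]

/-- Inner bound in `min` form, case β < 1. -/
lemma inner_min_lt {β : ℝ} (hβ : 0 < β) (hβ1 : β < 1) {a : ℝ} (ha0 : 0 < a) :
    ∫ w, min 1 (a * w) ∂(pareto β) ≤ min 1 ((1/(1-β)) * a ^ β) := by
  have h1β : (0:ℝ) < 1 - β := by linarith
  by_cases ha1 : a < 1
  · refine le_min (inner_le_one hβ ha0.le) ?_
    have := inner_lt hβ hβ1 ha0 ha1
    rwa [div_eq_mul_inv, mul_comm, ← one_div] at this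
  · push_neg at ha1
    have h2 : (1:ℝ) ≤ a ^ β := by
      calc (1:ℝ) = 1 ^ β := (Real.one_rpow β).symm
        _ ≤ a ^ β := Real.rpow_le_rpow zero_le_one ha1 hβ.le
    have h3 : (1:ℝ) ≤ (1/(1-β)) * a ^ β := by
      have hK : (1:ℝ) ≤ 1/(1-β) := by rw [le_div_iff₀ h1β]; linarith
      nlinarith
    rw [min_eq_left h3]
    exact inner_le_one hβ ha0.le

/-- Inner bound in `min` form, case β > 1. -/
lemma inner_min_gt {β : ℝ} (hβ1 : 1 < β) {a : ℝ} (ha0 : 0 < a) :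
    ∫ w, min 1 (a * w) ∂(pareto β) ≤ min 1 ((β/(β-1) + 1) * a) := by
  have hβ : (0:ℝ) < β := by linarith
  have hK : (1:ℝ) ≤ β/(β-1) + 1 := by
    have : 0 ≤ β/(β-1) := div_nonneg hβ.le (by linarith)
    linarith
  by_cases ha1 : a < 1
  · exact le_min (inner_le_one hβ ha0.le) (inner_gt hβ1 ha0 ha1)
  · push_neg at ha1
    have h3 : (1:ℝ) ≤ (β/(β-1) + 1) * a := by nlinarith
    rw [min_eq_left h3]
    exact inner_le_one hβ ha0.le

/-- Outer estimate, case β < 1. -/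
lemma outer_lt {β : ℝ} (hβ : 0 < β) (hβ1 : β < 1) {s : ℝ} (hs0 : 0 < s) (hs1 : s < 1) :
    ∫ w, min 1 ((1/(1-β)) * (s*w) ^ β) ∂(pareto β)
      ≤ (1/(1-β)) * β * s ^ β * Real.log (1/s) + s ^ β := by
  have h1β : (0:ℝ) < 1 - β := by linarith
  have hT : (1:ℝ) ≤ 1/s := (le_div_iff₀ hs0).mpr (by linarith)
  have hmeas : Measurable fun w : ℝ => min 1 ((1/(1-β)) * (s*w) ^ β) :=
    measurable_const.min (((measurable_id.const_mul s).pow_const β).const_mul _)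
  have h01 : ∀ w : ℝ, 1 ≤ w → 0 ≤ min 1 ((1/(1-β)) * (s*w) ^ β)
      ∧ min 1 ((1/(1-β)) * (s*w) ^ β) ≤ 1 := by
    intro w hw
    have hsw : (0:ℝ) ≤ s * w := mul_nonneg hs0.le (by linarith)
    exact ⟨le_min zero_le_one (mul_nonneg (by positivity) (Real.rpow_nonneg hsw β)),
      min_le_left _ _⟩
  have key := pareto_est hβ (c := (1/(1-β)) * β * s ^ β) (e := (-1:ℝ)) hT hmeas h01 ?_
  · rw [integral_Ico_inv hT] at key
    have h1 : (1/s) ^ (-β) = s ^ β := by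
      rw [one_div, Real.inv_rpow hs0.le, Real.rpow_neg hs0.le, inv_inv]
    rwa [h1] at key
  · intro w hw
    have hw0 : (0:ℝ) < w := lt_of_lt_of_le one_pos hw.1
    have hD0 : 0 ≤ β * w ^ (-β - 1) := by positivity
    calc β * w ^ (-β - 1) * min 1 ((1/(1-β)) * (s*w) ^ β)
        ≤ β * w ^ (-β - 1) * ((1/(1-β)) * (s*w) ^ β) :=
          mul_le_mul_of_nonneg_left (min_le_right _ _) hD0
      _ = (1/(1-β)) * β * s ^ β * w ^ (-1:ℝ) := by
          rw [Real.mul_rpow hs0.le hw0.le,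
            show (-1:ℝ) = (-β - 1) + β by ring, Real.rpow_add hw0]
          ring

/-- Outer estimate, case β > 1. -/
lemma outer_gt {β : ℝ} (hβ1 : 1 < β) {s : ℝ} (hs0 : 0 < s) (hs1 : s < 1) :
    ∫ w, min 1 ((β/(β-1) + 1) * (s*w)) ∂(pareto β)
      ≤ ((β/(β-1) + 1) * β / (β-1) + 1) * s := by
  have hβ : (0:ℝ) < β := by linarith
  have h1β : (0:ℝ) < β - 1 := by linarith
  have hT : (1:ℝ) ≤ 1/s := (le_div_iff₀ hs0).mpr (by linarith)
  set K := β/(β-1) + 1 with hK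
  have hK0 : (0:ℝ) < K := by positivity
  have hmeas : Measurable fun w : ℝ => min 1 (K * (s*w)) :=
    measurable_const.min ((measurable_id.const_mul s).const_mul K)
  have h01 : ∀ w : ℝ, 1 ≤ w → 0 ≤ min 1 (K * (s*w)) ∧ min 1 (K * (s*w)) ≤ 1 := by
    intro w hw
    have hsw : (0:ℝ) ≤ s * w := mul_nonneg hs0.le (by linarith)
    exact ⟨le_min zero_le_one (by positivity), min_le_left _ _⟩
  have key := pareto_est hβ (c := K * s * β) (e := -β) hT hmeas h01 ?_
  · rw [integral_Ico_rpow hT (by linarith)] at key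
    have h1 : (1/s) ^ (-β) = s ^ β := by
      rw [one_div, Real.inv_rpow hs0.le, Real.rpow_neg hs0.le, inv_inv]
    rw [h1] at key
    refine le_trans key ?_
    have hTpos : (0:ℝ) ≤ (1/s) ^ (-β + 1) := Real.rpow_nonneg (by positivity) _
    have hfrac : ((1/s) ^ (-β+1) - 1) / (-β + 1) ≤ 1 / (β - 1) := by
      have heq : ((1/s) ^ (-β+1) - 1) / (-β + 1) = (1 - (1/s) ^ (-β+1)) / (β - 1) := by
        rw [div_eq_div_iff (by linarith) (by linarith)]; ring
      rw [heq, div_le_div_iff₀ h1β h1β]; nlinarith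
    have hsβ : s ^ β ≤ s := by
      calc s ^ β ≤ s ^ (1:ℝ) := Real.rpow_le_rpow_of_exponent_ge hs0 hs1.le (by linarith)
        _ = s := Real.rpow_one s
    calc K * s * β * (((1/s) ^ (-β+1) - 1) / (-β + 1)) + s ^ β
        ≤ K * s * β * (1 / (β - 1)) + s := by
          exact add_le_add (mul_le_mul_of_nonneg_left hfrac (by positivity)) hsβ
      _ = (K * β / (β-1) + 1) * s := by field_simp
  · intro w hw
    have hw0 : (0:ℝ) < w := lt_of_lt_of_le one_pos hw.1
    have hD0 : 0 ≤ β * w ^ (-β - 1) := by positivity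
    calc β * w ^ (-β - 1) * min 1 (K * (s*w))
        ≤ β * w ^ (-β - 1) * (K * (s*w)) :=
          mul_le_mul_of_nonneg_left (min_le_right _ _) hD0
      _ = K * s * β * w ^ (-β) := by
          rw [show (-β:ℝ) = (-β - 1) + 1 by ring, Real.rpow_add_one hw0.ne']
          ring

end Stmt7

open Stmt7 in
theorem stmt7 (β α η : ℝ) (hβ : 0 < β) (hβ1 : β ≠ 1) (hα : 0 < α) (hη : 0 < η) :
    ∃ C₁ C₂ C₃ : ℝ, 0 ≤ C₁ ∧ 0 ≤ C₂ ∧ 0 ≤ C₃ ∧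
      ∀ r : ℝ, max 1 (η ^ (1 / α)) < r →
        ∫ p : ℝ × ℝ, (1 - Real.exp (-(η * p.1 * p.2 / r ^ α)))
            ∂((pareto β).prod (pareto β)) ≤
          C₁ * r ^ (-α) + C₂ * r ^ (-(α * β)) * Real.log r + C₃ * r ^ (-(α * β)) := by
  rcases lt_or_gt_of_ne hβ1 with hlt | hgt
  · -- case β < 1
    have h1β : (0:ℝ) < 1 - β := by linarith
    refine ⟨0, (1/(1-β))*β*η^β*α, (1/(1-β))*β*η^β*|Real.log η| + η^β,
      le_rfl, by positivity, by positivity, ?_⟩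
    intro r hr
    have hr1 : (1:ℝ) < r := lt_of_le_of_lt (le_max_left _ _) hr
    have hrη : η ^ (1/α) < r := lt_of_le_of_lt (le_max_right _ _) hr
    have hr0 : (0:ℝ) < r := by linarith
    have hR0 : (0:ℝ) < r ^ α := by positivity
    have hηR : η < r ^ α := by
      calc η = (η ^ (1/α)) ^ α := by
            rw [← Real.rpow_mul hη.le, one_div_mul_cancel hα.ne', Real.rpow_one]
        _ < r ^ α := Real.rpow_lt_rpow (Real.rpow_nonneg hη.le _) hrη hα
    set s := η / r ^ α with hs_def
    have hs0 : 0 < s := by positivity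
    have hs1 : s < 1 := (div_lt_one hR0).mpr hηR
    have hrw : ∀ p : ℝ × ℝ, -(η * p.1 * p.2 / r ^ α) = -(s * (p.1 * p.2)) := fun p => by
      rw [hs_def]; ring
    simp only [hrw]
    have hBmeas : Measurable fun w : ℝ => min 1 ((1/(1-β)) * (s*w) ^ β) :=
      measurable_const.min (((measurable_id.const_mul s).pow_const β).const_mul _)
    have hB01 : ∀ w : ℝ, 1 ≤ w → 0 ≤ min 1 ((1/(1-β)) * (s*w) ^ β)
        ∧ min 1 ((1/(1-β)) * (s*w) ^ β) ≤ 1 := by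
      intro w hw
      have hsw : (0:ℝ) ≤ s * w := mul_nonneg hs0.le (by linarith)
      exact ⟨le_min zero_le_one (mul_nonneg (by positivity) (Real.rpow_nonneg hsw β)),
        min_le_left _ _⟩
    have main := (step12 hβ hs0 hBmeas hB01 (fun w₁ hw₁ =>
        inner_min_lt hβ hlt (mul_pos hs0 (by linarith)))).trans
      (outer_lt hβ hlt hs0 hs1)
    refine main.trans ?_
    have hXdef : s ^ β = η ^ β * r ^ (-(α*β)) := by
      rw [hs_def, Real.div_rpow hη.le hR0.le, ← Real.rpow_mul hr0.le,
        Real.rpow_neg hr0.le, div_eq_mul_inv]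
    have hlog : Real.log (1/s) = α * Real.log r - Real.log η := by
      rw [hs_def, one_div_div, Real.log_div hR0.ne' hη.ne', Real.log_rpow hr0]
    rw [hXdef, hlog]
    have hX0 : 0 < r ^ (-(α*β)) := by positivity
    have habs : -Real.log η ≤ |Real.log η| := neg_le_abs _
    have key2 : (1/(1-β))*β*η^β * (r ^ (-(α*β))) * (-Real.log η)
        ≤ (1/(1-β))*β*η^β * (r ^ (-(α*β))) * |Real.log η| :=
      mul_le_mul_of_nonneg_left habs (by positivity)
    calc (1/(1-β)) * β * (η^β * r ^ (-(α*β))) * (α * Real.log r - Real.log η)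
          + η^β * r ^ (-(α*β))
        = (1/(1-β))*β*η^β*α * r ^ (-(α*β)) * Real.log r
          + (1/(1-β))*β*η^β * (r ^ (-(α*β))) * (-Real.log η)
          + η^β * r ^ (-(α*β)) := by ring
      _ ≤ (1/(1-β))*β*η^β*α * r ^ (-(α*β)) * Real.log r
          + (1/(1-β))*β*η^β * (r ^ (-(α*β))) * |Real.log η|
          + η^β * r ^ (-(α*β)) := by linarith [key2]
      _ = 0 * r ^ (-α) + (1/(1-β))*β*η^β*α * r ^ (-(α * β)) * Real.log r
          + ((1/(1-β))*β*η^β*|Real.log η| + η^β) * r ^ (-(α * β)) := by ring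
  · -- case β > 1
    have h1β : (0:ℝ) < β - 1 := by linarith
    have hd : (0:ℝ) ≤ β/(β-1) := div_nonneg hβ.le h1β.le
    have hC : (0:ℝ) ≤ (β/(β-1) + 1) * β / (β-1) + 1 := by
      have : (0:ℝ) ≤ (β/(β-1) + 1) * β / (β-1) :=
        div_nonneg (mul_nonneg (by linarith) hβ.le) h1β.le
      linarith
    refine ⟨((β/(β-1) + 1) * β / (β-1) + 1) * η, 0, 0,
      mul_nonneg hC hη.le, le_rfl, le_rfl, ?_⟩
    intro r hr
    have hr1 : (1:ℝ) < r := lt_of_le_of_lt (le_max_left _ _) hr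
    have hrη : η ^ (1/α) < r := lt_of_le_of_lt (le_max_right _ _) hr
    have hr0 : (0:ℝ) < r := by linarith
    have hR0 : (0:ℝ) < r ^ α := by positivity
    have hηR : η < r ^ α := by
      calc η = (η ^ (1/α)) ^ α := by
            rw [← Real.rpow_mul hη.le, one_div_mul_cancel hα.ne', Real.rpow_one]
        _ < r ^ α := Real.rpow_lt_rpow (Real.rpow_nonneg hη.le _) hrη hα
    set s := η / r ^ α with hs_def
    have hs0 : 0 < s := by positivity
    have hs1 : s < 1 := (div_lt_one hR0).mpr hηR
    have hrw : ∀ p : ℝ × ℝ, -(η * p.1 * p.2 / r ^ α) = -(s * (p.1 * p.2)) := fun p => by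
      rw [hs_def]; ring
    simp only [hrw]
    have hK0 : (0:ℝ) < β/(β-1) + 1 := by linarith
    have hBmeas : Measurable fun w : ℝ => min 1 ((β/(β-1) + 1) * (s*w)) :=
      measurable_const.min ((measurable_id.const_mul s).const_mul _)
    have hB01 : ∀ w : ℝ, 1 ≤ w → 0 ≤ min 1 ((β/(β-1) + 1) * (s*w))
        ∧ min 1 ((β/(β-1) + 1) * (s*w)) ≤ 1 := by
      intro w hw
      have hsw : (0:ℝ) ≤ s * w := mul_nonneg hs0.le (by linarith)
      exact ⟨le_min zero_le_one (by positivity), min_le_left _ _⟩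
    have main := (step12 hβ hs0 hBmeas hB01 (fun w₁ hw₁ =>
        inner_min_gt hgt (mul_pos hs0 (by linarith)))).trans
      (outer_gt hgt hs0 hs1)
    refine main.trans ?_
    have hs_eq : s = η * r ^ (-α) := by
      rw [hs_def, Real.rpow_neg hr0.le, div_eq_mul_inv]
    rw [hs_eq]
    refine le_of_eq ?_
    ring
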